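/- Let A_K^W denote the space of W-invariant elements of level K in the Looijenga algebra A (W-invariant elements of the completed group algebra of the affine sl2 weight lattice that remain in the completion after every Weyl group element is applied). If K < 0 then A_K^W = {0}. Moreover A_0^W = { Σ_{n ≤ n_0} a_n e^{nδ} : a_n ∈ C, n_0 ∈ N }, and A_0^W is a field. -/

import Mathlib

open scoped Classical

/-- The weight lattice `P ≅ ℤ³` via `λ ↦ (λ(h₀), λ(h₁), λ(d))`; simple reflection
`s_{α₀}(λ) = λ − λ(h₀)α₀`, `α₀ = (2,−2,1)`. -/
def s0z : ℤ × ℤ × ℤ → ℤ × ℤ × ℤ := fun p => (-p.1, p.2.1 + 2 * p.1, p.2.2 - p.1)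

/-- Simple reflection `s_{α₁}(λ) = λ − λ(h₁)α₁`, `α₁ = (−2,2,0)`. -/
def s1z : ℤ × ℤ × ℤ → ℤ × ℤ × ℤ := fun p => (p.1 + 2 * p.2.1, -p.2.1, p.2.2)

lemma s0z_involutive : Function.Involutive s0z := by
  rintro ⟨x, y, z⟩; simp only [s0z, Prod.mk.injEq]; refine ⟨by ring, by ring, by ring⟩

lemma s1z_involutive : Function.Involutive s1z := by
  rintro ⟨x, y, z⟩; simp only [s1z, Prod.mk.injEq]; refine ⟨by ring, by ring, by first | ring | trivial⟩

/-- The affine Weyl group of `sl2`-hat, acting on the weight lattice. -/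
def Wz : Subgroup (Equiv.Perm (ℤ × ℤ × ℤ)) :=
  Subgroup.closure {s0z_involutive.toPerm, s1z_involutive.toPerm}

/-- Twice the `ρ`-pairing: `2(λ,ρ) = λ(h₁) + 4λ(d)` for `λ = (λ(h₀), λ(h₁), λ(d))`,
where `ρ = ϖ₀ + ϖ₁`. -/
def rhoPair (v : ℤ × ℤ × ℤ) : ℤ := v.2.1 + 4 * v.2.2

/-- Membership in the completion `C̄[P_K]`: a formal sum `Σ_{λ∈P_K} f(λ) eᵠ` supported
on level `K`, such that for every `N ∈ ℤ` only finitely many `λ` in the support have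
`(λ,ρ) ≥ N`. -/
def InCbar (K : ℤ) (f : ℤ × ℤ × ℤ → ℂ) : Prop :=
  (∀ v, f v ≠ 0 → v.1 + v.2.1 = K) ∧
  ∀ N : ℤ, {v : ℤ × ℤ × ℤ | f v ≠ 0 ∧ N ≤ rhoPair v}.Finite

/-- Membership in the Looijenga space `A_K = ⋂_{w∈W} w(C̄[P_K])`. -/
def InA (K : ℤ) (f : ℤ × ℤ × ℤ → ℂ) : Prop :=
  ∀ w ∈ Wz, InCbar K (fun v => f (w v))

/-- Membership in `A_K^W`: `W`-invariant elements of `A_K` (invariance under the two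
generating reflections suffices). -/
def InAW (K : ℤ) (f : ℤ × ℤ × ℤ → ℂ) : Prop :=
  InA K f ∧ (∀ v, f (s0z v) = f v) ∧ (∀ v, f (s1z v) = f v)

/-- The convolution product of formal sums: `(f⋆g)(v) = Σ_u f(u)g(v-u)`. -/
noncomputable def conv (f g : ℤ × ℤ × ℤ → ℂ) : ℤ × ℤ × ℤ → ℂ :=
  fun v => ∑ᶠ u : ℤ × ℤ × ℤ, f u * g (v - u)


-- AUXILIARY LEMMAS

lemma s0z_fix {v : ℤ × ℤ × ℤ} (h : v.1 = 0) : s0z v = v := by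
  obtain ⟨x, y, z⟩ := v; simp at h; subst h; simp [s0z]

lemma s1z_fix {v : ℤ × ℤ × ℤ} (h : v.2.1 = 0) : s1z v = v := by
  obtain ⟨x, y, z⟩ := v; simp at h; subst h; simp [s1z]

lemma w_invariant {f : ℤ × ℤ × ℤ → ℂ} (h0 : ∀ v, f (s0z v) = f v)
    (h1 : ∀ v, f (s1z v) = f v) {w : Equiv.Perm (ℤ × ℤ × ℤ)} (hw : w ∈ Wz) :
    ∀ v, f (w v) = f v := by
  refine Subgroup.closure_induction (p := fun w _ => ∀ v, f (w v) = f v) ?_ ?_ ?_ ?_ hw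
  · rintro x (rfl | rfl) v
    · exact h0 v
    · exact h1 v
  · intro v; rfl
  · intro a b _ _ ha hb v
    rw [Equiv.Perm.mul_apply, ha, hb]
  · intro a _ ha v
    have := ha (a⁻¹ v)
    rw [show a (a⁻¹ v) = v from Equiv.apply_symm_apply a v] at this; exact this.symm

/-- Invariance + `InCbar` at the identity imply full membership in `A_K^W`. -/
lemma inAW_of_invariant_inCbar {K : ℤ} {f : ℤ × ℤ × ℤ → ℂ}
    (h0 : ∀ v, f (s0z v) = f v) (h1 : ∀ v, f (s1z v) = f v)
    (hC : InCbar K f) : InAW K f := by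
  refine ⟨fun w hw => ?_, h0, h1⟩
  have : (fun v => f (w v)) = f := funext (w_invariant h0 h1 hw)
  rw [this]; exact hC

lemma inCbar_of_inAW {K : ℤ} {f : ℤ × ℤ × ℤ → ℂ} (h : InAW K f) : InCbar K f := by
  have := h.1 1 (one_mem _)
  simpa using this

/-- Series supported on `{n·δ : n ≤ n₀}` lie in `A_0^W`. -/
lemma inAW_of_support {n₀ : ℤ} {f : ℤ × ℤ × ℤ → ℂ}
    (hs : ∀ v, f v ≠ 0 → v.1 = 0 ∧ v.2.1 = 0 ∧ v.2.2 ≤ n₀) : InAW 0 f := by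
  have h0 : ∀ v, f (s0z v) = f v := by
    intro v
    rcases eq_or_ne (f v) 0 with hv | hv
    · rcases eq_or_ne (f (s0z v)) 0 with hv' | hv'
      · rw [hv, hv']
      · have := (hs _ hv').1
        have hx : v.1 = 0 := by simpa [s0z] using this
        rw [s0z_fix hx]
    · rw [s0z_fix (hs _ hv).1]
  have h1 : ∀ v, f (s1z v) = f v := by
    intro v
    rcases eq_or_ne (f v) 0 with hv | hv
    · rcases eq_or_ne (f (s1z v)) 0 with hv' | hv'
      · rw [hv, hv']
      · have := (hs _ hv').2.1
        have hx : v.2.1 = 0 := by simpa [s1z] using this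
        rw [s1z_fix hx]
    · rw [s1z_fix (hs _ hv).2.1]
  refine inAW_of_invariant_inCbar h0 h1 ⟨fun v hv => by rw [(hs v hv).1, (hs v hv).2.1]; ring, ?_⟩
  intro N
  refine Set.Finite.subset (Set.Finite.image (fun z => ((0:ℤ),(0:ℤ),z))
    (Set.finite_Icc (-|N|) n₀)) ?_
  rintro ⟨x, y, z⟩ ⟨hne, hN⟩
  obtain ⟨hx, hy, hz⟩ := hs _ hne
  simp only [rhoPair] at hN
  simp at hx hy hz
  refine ⟨z, ⟨?_, hz⟩, by simp [hx, hy]⟩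
  have : -4*|N| ≤ N := by have := abs_nonneg N; have := neg_abs_le N; linarith
  omega
/-- The translation `t = s₁ ∘ s₀`. -/
def tzv (v : ℤ × ℤ × ℤ) : ℤ × ℤ × ℤ := s1z (s0z v)

/-- The translation `t⁻¹ = s₀ ∘ s₁`. -/
def uzv (v : ℤ × ℤ × ℤ) : ℤ × ℤ × ℤ := s0z (s1z v)

lemma f_tzv {f : ℤ × ℤ × ℤ → ℂ} (h0 : ∀ v, f (s0z v) = f v)
    (h1 : ∀ v, f (s1z v) = f v) (n : ℕ) (v : ℤ × ℤ × ℤ) : f (tzv^[n] v) = f v := by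
  induction n with
  | zero => rfl
  | succ n ih => rw [Function.iterate_succ_apply', tzv, h1, h0, ih]

lemma f_uzv {f : ℤ × ℤ × ℤ → ℂ} (h0 : ∀ v, f (s0z v) = f v)
    (h1 : ∀ v, f (s1z v) = f v) (n : ℕ) (v : ℤ × ℤ × ℤ) : f (uzv^[n] v) = f v := by
  induction n with
  | zero => rfl
  | succ n ih => rw [Function.iterate_succ_apply', uzv, h0, h1, ih]

lemma tzv_iter (x y z : ℤ) (n : ℕ) :
    tzv^[n] (x, y, z) =
      (x + 2*n*(x+y), y - 2*n*(x+y), z - n*x - (n*((n:ℤ)-1))*(x+y)) := by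
  induction n with
  | zero => simp
  | succ n ih =>
    rw [Function.iterate_succ_apply', ih]
    simp only [tzv, s0z, s1z, Prod.mk.injEq]
    push_cast
    refine ⟨by ring, by ring, by ring⟩

lemma uzv_iter0 (x z : ℤ) (n : ℕ) :
    uzv^[n] (x, -x, z) = (x, -x, z + n*x) := by
  induction n with
  | zero => simp
  | succ n ih =>
    rw [Function.iterate_succ_apply', ih]
    simp only [uzv, s0z, s1z, Prod.mk.injEq]
    push_cast
    refine ⟨by ring, by ring, by ring⟩
lemma eq_zero_of_neg_level {K : ℤ} (hK : K < 0) {f : ℤ × ℤ × ℤ → ℂ}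
    (hf : InAW K f) : f = 0 := by
  funext v
  show f v = 0
  by_contra hv
  obtain ⟨x, y, z⟩ := v
  have hlev : x + y = K := (inCbar_of_inAW hf).1 _ hv
  set N : ℤ := rhoPair (x, y, z) - (2*K - 4*x)^2 with hN
  have hfin := (inCbar_of_inAW hf).2 N
  have hinj : Function.Injective (fun n : ℕ => tzv^[n] (x, y, z)) := by
    intro m n h
    simp only [tzv_iter] at h
    have h1 : x + 2*(m:ℤ)*(x+y) = x + 2*(n:ℤ)*(x+y) := congrArg Prod.fst h
    have h2 : 2*(m:ℤ)*K = 2*(n:ℤ)*K := by rw [← hlev]; linarith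
    have h3 : 2*(m:ℤ) = 2*(n:ℤ) := mul_right_cancel₀ hK.ne h2
    omega
  have hmem : ∀ n : ℕ, tzv^[n] (x, y, z) ∈ {v : ℤ × ℤ × ℤ | f v ≠ 0 ∧ N ≤ rhoPair v} := by
    intro n
    refine ⟨by rw [f_tzv hf.2.1 hf.2.2]; exact hv, ?_⟩
    rw [tzv_iter]
    simp only [rhoPair, hN] at *
    have hxy : x + y ≤ -1 := by omega
    have hn : (0:ℤ) ≤ (n:ℤ) := Int.natCast_nonneg n
    nlinarith [sq_nonneg (8*(n:ℤ) + (2*K - 4*x)), sq_nonneg (2*K - 4*x),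
      mul_nonneg (by nlinarith : (0:ℤ) ≤ -4*K - 4) (sq_nonneg (n:ℤ))]
  exact Set.infinite_of_injective_forall_mem hinj hmem hfin

/-- Level-0 invariants are supported on the `δ`-line. -/
lemma support_delta {f : ℤ × ℤ × ℤ → ℂ} (hf : InAW 0 f) :
    ∀ v, f v ≠ 0 → v.1 = 0 ∧ v.2.1 = 0 := by
  rintro ⟨x, y, z⟩ hv
  have hlev : x + y = 0 := (inCbar_of_inAW hf).1 _ hv
  have hy : y = -x := by omega
  subst hy
  rcases lt_trichotomy x 0 with hx | hx | hx
  · exfalso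
    set N : ℤ := rhoPair (x, -x, z) with hN
    have hfin := (inCbar_of_inAW hf).2 N
    have hinj : Function.Injective (fun n : ℕ => tzv^[n] (x, -x, z)) := by
      intro m n h
      simp only [tzv_iter] at h
      have h1 := congrArg (fun p : ℤ × ℤ × ℤ => p.2.2) h
      simp only at h1
      have : (m:ℤ) * x = (n:ℤ) * x := by nlinarith [h1]
      have := mul_right_cancel₀ hx.ne this
      omega
    have hmem : ∀ n : ℕ, tzv^[n] (x, -x, z) ∈ {v : ℤ × ℤ × ℤ | f v ≠ 0 ∧ N ≤ rhoPair v} := by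
      intro n
      refine ⟨by rw [f_tzv hf.2.1 hf.2.2]; exact hv, ?_⟩
      rw [tzv_iter]
      simp only [rhoPair, hN]
      have hn : (0:ℤ) ≤ (n:ℤ) := Int.natCast_nonneg n
      nlinarith
    exact Set.infinite_of_injective_forall_mem hinj hmem hfin
  · exact ⟨hx, show -x = 0 by omega⟩
  · exfalso
    set N : ℤ := rhoPair (x, -x, z) with hN
    have hfin := (inCbar_of_inAW hf).2 N
    have hinj : Function.Injective (fun n : ℕ => uzv^[n] (x, -x, z)) := by
      intro m n h
      simp only [uzv_iter0] at h
      have h1 := congrArg (fun p : ℤ × ℤ × ℤ => p.2.2) h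
      simp only at h1
      have : (m:ℤ) * x = (n:ℤ) * x := by linarith
      have := mul_right_cancel₀ hx.ne' this
      omega
    have hmem : ∀ n : ℕ, uzv^[n] (x, -x, z) ∈ {v : ℤ × ℤ × ℤ | f v ≠ 0 ∧ N ≤ rhoPair v} := by
      intro n
      refine ⟨by rw [f_uzv hf.2.1 hf.2.2]; exact hv, ?_⟩
      rw [uzv_iter0]
      simp only [rhoPair, hN]
      have hn : (0:ℤ) ≤ (n:ℤ) := Int.natCast_nonneg n
      nlinarith
    exact Set.infinite_of_injective_forall_mem hinj hmem hfin

/-- Level-0 invariants have `δ`-support bounded above. -/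
lemma support_of_inAW {f : ℤ × ℤ × ℤ → ℂ} (hf : InAW 0 f) :
    ∃ n₀ : ℤ, ∀ v, f v ≠ 0 → v.1 = 0 ∧ v.2.1 = 0 ∧ v.2.2 ≤ n₀ := by
  have hfin := (inCbar_of_inAW hf).2 0
  obtain ⟨b, hb⟩ := (hfin.image (fun v => v.2.2)).bddAbove
  refine ⟨max b 0, fun v hv => ?_⟩
  obtain ⟨hx, hy⟩ := support_delta hf v hv
  refine ⟨hx, hy, ?_⟩
  rcases le_or_gt 0 (rhoPair v) with h | h
  · have : v.2.2 ≤ b := hb ⟨v, ⟨hv, h⟩, rfl⟩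
    exact this.trans (le_max_left _ _)
  · simp only [rhoPair, hy] at h
    omega
/-- Coefficients of the inverse power series: `H 0 = F(d)⁻¹`,
`H (k+1) = -F(d)⁻¹ Σ_{j≤k} F(d-(k+1)+j) H j`. -/
noncomputable def Hrec (F : ℤ → ℂ) (d : ℤ) : ℕ → ℂ
  | 0 => (F d)⁻¹
  | (k+1) => -(F d)⁻¹ * ∑ j ∈ (Finset.range (k+1)).attach,
      F (d - ((k:ℤ)+1) + (j.1:ℤ)) * Hrec F d j.1
  decreasing_by exact Finset.mem_range.mp j.2

lemma Hrec_zero (F : ℤ → ℂ) (d : ℤ) : Hrec F d 0 = (F d)⁻¹ := by rw [Hrec]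

lemma Hrec_succ (F : ℤ → ℂ) (d : ℤ) (k : ℕ) :
    Hrec F d (k+1) = -(F d)⁻¹ * ∑ j ∈ Finset.range (k+1),
      F (d - ((k:ℤ)+1) + (j:ℤ)) * Hrec F d j := by
  rw [Hrec]
  congr 1
  exact Finset.sum_attach (Finset.range (k+1)) (fun j => F (d - ((k:ℤ)+1) + (j:ℤ)) * Hrec F d j)

/-- One-variable inverse series, supported on `z ≤ -d`. -/
noncomputable def Ginv (F : ℤ → ℂ) (d : ℤ) : ℤ → ℂ :=
  fun z => if z ≤ -d then Hrec F d (-d - z).toNat else 0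

/-- The inverse element of `A_0^W`. -/
noncomputable def ginv (F : ℤ → ℂ) (d : ℤ) : ℤ × ℤ × ℤ → ℂ :=
  fun v => if v.1 = 0 ∧ v.2.1 = 0 then Ginv F d v.2.2 else 0

lemma sum_inv (F : ℤ → ℂ) (d : ℤ) (hd : F d ≠ 0) (n : ℤ) :
    ∑ a ∈ Finset.Icc (n+d) d, F a * Ginv F d (n-a) = if n = 0 then 1 else 0 := by
  rcases lt_trichotomy n 0 with hn | rfl | hn
  · rw [if_neg hn.ne]
    obtain ⟨k, hk⟩ : ∃ k : ℕ, (k:ℤ) = -n := ⟨(-n).toNat, Int.toNat_of_nonneg (by omega)⟩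
    obtain ⟨m, rfl⟩ : ∃ m, k = m + 1 := by
      refine Nat.exists_eq_succ_of_ne_zero ?_
      omega
    have himg : Finset.Icc (n+d) d = Finset.image (fun j : ℕ => n + d + (j:ℤ)) (Finset.range (m+2)) := by
      ext a
      simp only [Finset.mem_Icc, Finset.mem_image, Finset.mem_range]
      constructor
      · intro ⟨h1, h2⟩
        refine ⟨(a - n - d).toNat, by omega, by omega⟩
      · rintro ⟨j, hj, rfl⟩
        omega
    rw [himg, Finset.sum_image (by intro a _ b _ h; exact Nat.cast_injective (add_left_cancel h))]
    have hterm : ∀ j : ℕ, F (n+d+(j:ℤ)) * Ginv F d (n - (n+d+(j:ℤ)))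
        = F (n+d+(j:ℤ)) * Hrec F d j := by
      intro j
      have h1 : n - (n+d+(j:ℤ)) = -d - (j:ℤ) := by ring
      have h2 : (-d - (-d - (j:ℤ))).toNat = j := by omega
      rw [h1, Ginv, if_pos (by omega), h2]
    rw [Finset.sum_congr rfl (fun j _ => hterm j)]
    have hm1 : m + 2 = (m + 1) + 1 := rfl
    rw [hm1, Finset.sum_range_succ]
    have hcoord : n + d + ((m+1:ℕ):ℤ) = d := by push_cast; omega
    rw [hcoord, Hrec_succ]
    have harg : ∀ j : ℕ, d - ((m:ℤ)+1) + (j:ℤ) = n + d + (j:ℤ) := by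
      intro j; push_cast at hk ⊢; omega
    simp only [harg]
    field_simp
    ring
  · rw [if_pos rfl]
    have : (0:ℤ) + d = d := by ring
    rw [this, Finset.Icc_self, Finset.sum_singleton]
    have h1 : (0:ℤ) - d = -d := by ring
    rw [h1, Ginv, if_pos le_rfl]
    have h2 : (-d - -d).toNat = 0 := by omega
    rw [h2, Hrec_zero, mul_inv_cancel₀ hd]
  · rw [if_neg hn.ne', Finset.Icc_eq_empty (by omega), Finset.sum_empty]
lemma conv_support {f g : ℤ × ℤ × ℤ → ℂ} {n₀ m₀ : ℤ}
    (hf : ∀ v, f v ≠ 0 → v.1 = 0 ∧ v.2.1 = 0 ∧ v.2.2 ≤ n₀)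
    (hg : ∀ v, g v ≠ 0 → v.1 = 0 ∧ v.2.1 = 0 ∧ v.2.2 ≤ m₀) :
    ∀ v, conv f g v ≠ 0 → v.1 = 0 ∧ v.2.1 = 0 ∧ v.2.2 ≤ n₀ + m₀ := by
  intro v hv
  by_contra hcond
  apply hv
  show (∑ᶠ u, f u * g (v - u)) = 0
  apply finsum_eq_zero_of_forall_eq_zero
  intro u
  by_contra hu
  obtain ⟨h1, h2, h3⟩ := hf u (left_ne_zero_of_mul hu)
  obtain ⟨h4, h5, h6⟩ := hg _ (right_ne_zero_of_mul hu)
  rw [Prod.fst_sub] at h4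
  rw [Prod.snd_sub, Prod.fst_sub] at h5
  rw [Prod.snd_sub, Prod.snd_sub] at h6
  exact hcond ⟨by omega, by omega, by omega⟩

lemma conv_inverse {f : ℤ × ℤ × ℤ → ℂ} {d n₀ : ℤ}
    (hs : ∀ v, f v ≠ 0 → v.1 = 0 ∧ v.2.1 = 0 ∧ v.2.2 ≤ n₀)
    (hd : f (0,0,d) ≠ 0) (hdmax : ∀ z, f (0,0,z) ≠ 0 → z ≤ d) :
    conv f (ginv (fun z => f (0,0,z)) d) = fun v => if v = 0 then (1:ℂ) else 0 := by
  set F : ℤ → ℂ := fun z => f (0,0,z) with hF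
  funext v
  obtain ⟨x, y, n⟩ := v
  show (∑ᶠ u, f u * ginv F d ((x,y,n) - u)) = _
  by_cases hline : x = 0 ∧ y = 0
  · obtain ⟨rfl, rfl⟩ := hline
    have hRHS : (if ((0:ℤ),(0:ℤ),n) = (0:ℤ×ℤ×ℤ) then (1:ℂ) else 0)
        = (if n = 0 then (1:ℂ) else 0) := by
      by_cases h : n = 0 <;> simp [h, Prod.ext_iff]
    rw [hRHS]
    set s : Finset (ℤ × ℤ × ℤ) := (Finset.Icc (n+d) d).image (fun a => ((0:ℤ),(0:ℤ),a))
      with hsdef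
    have hsub : Function.support (fun u => f u * ginv F d (((0:ℤ),(0:ℤ),n) - u)) ⊆ ↑s := by
      intro u hu
      simp only [Function.mem_support] at hu
      obtain ⟨ux, uy, uz⟩ := u
      obtain ⟨h1, h2, _⟩ := hs _ (left_ne_zero_of_mul hu)
      simp only at h1 h2
      subst h1; subst h2
      have hgu := right_ne_zero_of_mul hu
      have hsub2 : ((0:ℤ),(0:ℤ),n) - ((0:ℤ),(0:ℤ),uz) = ((0:ℤ),(0:ℤ),n-uz) := by
        simp [Prod.ext_iff]
      rw [hsub2] at hgu
      simp only [ginv, if_pos (⟨rfl, rfl⟩ : (0:ℤ) = 0 ∧ (0:ℤ) = 0)] at hgu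
      have hle : n - uz ≤ -d := by
        by_contra hc
        rw [Ginv, if_neg hc] at hgu
        exact hgu rfl
      have hud : uz ≤ d := hdmax uz (left_ne_zero_of_mul hu)
      simp only [hsdef, Finset.coe_image, Set.mem_image, Finset.mem_coe, Finset.mem_Icc]
      exact ⟨uz, ⟨by omega, hud⟩, rfl⟩
    rw [finsum_eq_finset_sum_of_support_subset _ hsub]
    rw [Finset.sum_image (by rintro a _ b _ h; simpa [Prod.ext_iff] using h)]
    have hterm : ∀ a : ℤ, f ((0:ℤ),(0:ℤ),a) * ginv F d (((0:ℤ),(0:ℤ),n) - ((0:ℤ),(0:ℤ),a))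
        = F a * Ginv F d (n - a) := by
      intro a
      have hsub2 : ((0:ℤ),(0:ℤ),n) - ((0:ℤ),(0:ℤ),a) = ((0:ℤ),(0:ℤ),n-a) := by
        simp [Prod.ext_iff]
      rw [hsub2]
      simp only [ginv, if_pos (⟨rfl, rfl⟩ : (0:ℤ) = 0 ∧ (0:ℤ) = 0)]
      rfl
    rw [Finset.sum_congr rfl (fun a _ => hterm a)]
    exact sum_inv F d hd n
  · rw [if_neg (by simp only [Prod.mk_eq_zero]; tauto)]
    apply finsum_eq_zero_of_forall_eq_zero
    intro u
    by_contra hu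
    obtain ⟨ux, uy, uz⟩ := u
    obtain ⟨h1, h2, _⟩ := hs _ (left_ne_zero_of_mul hu)
    simp only at h1 h2
    subst h1; subst h2
    have hgu := right_ne_zero_of_mul hu
    have hcond : ((x,y,n) - ((0:ℤ),(0:ℤ),uz)).1 = 0 ∧ ((x,y,n) - ((0:ℤ),(0:ℤ),uz)).2.1 = 0 := by
      by_contra hc
      simp only [ginv, if_neg hc] at hgu
      exact hgu rfl
    apply hline
    obtain ⟨hc1, hc2⟩ := hcond
    simp only [Prod.fst_sub, Prod.snd_sub] at hc1 hc2
    constructor <;> omega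

/-- If `K < 0` then `A_K^W = 0`; `A_0^W` consists precisely of the series
`Σ_{n ≤ n₀} aₙ e^{nδ}` (with `δ = (0,0,1)`), and `A_0^W` is a field: it is closed
under the convolution product and every nonzero element has an inverse. -/
theorem level_zero_invariants :
    (∀ K : ℤ, K < 0 → ∀ f, InAW K f → f = 0) ∧
    (∀ f, InAW 0 f ↔
      ∃ n₀ : ℤ, ∀ v, f v ≠ 0 → v.1 = 0 ∧ v.2.1 = 0 ∧ v.2.2 ≤ n₀) ∧
    (∀ f g, InAW 0 f → InAW 0 g → InAW 0 (conv f g)) ∧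
    (∀ f, InAW 0 f → f ≠ 0 →
      ∃ g, InAW 0 g ∧ conv f g = fun v => if v = 0 then (1 : ℂ) else 0) := by
  refine ⟨fun K hK f hf => eq_zero_of_neg_level hK hf, ?_, ?_, ?_⟩
  · intro f
    exact ⟨support_of_inAW, fun ⟨n₀, hs⟩ => inAW_of_support hs⟩
  · intro f g hf hg
    obtain ⟨n₀, hsf⟩ := support_of_inAW hf
    obtain ⟨m₀, hsg⟩ := support_of_inAW hg
    exact inAW_of_support (conv_support hsf hsg)
  · intro f hf hne
    obtain ⟨n₀, hs⟩ := support_of_inAW hf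
    obtain ⟨v, hv⟩ := Function.ne_iff.mp hne
    obtain ⟨a, b, c⟩ := v
    simp only [Pi.zero_apply] at hv
    obtain ⟨h1, h2, _⟩ := hs _ hv
    simp only at h1 h2
    subst h1; subst h2
    obtain ⟨d, hd, hdmax⟩ := Int.exists_greatest_of_bdd
      (P := fun z => f ((0:ℤ),(0:ℤ),z) ≠ 0) ⟨n₀, fun z hz => (hs _ hz).2.2⟩ ⟨c, hv⟩
    refine ⟨ginv (fun z => f (0,0,z)) d, ?_, conv_inverse hs hd hdmax⟩
    apply inAW_of_support (n₀ := -d)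
    intro u hu
    simp only [ginv] at hu
    split_ifs at hu with h
    · refine ⟨h.1, h.2, ?_⟩
      simp only [Ginv] at hu
      split_ifs at hu with h2
      · exact h2
      · exact absurd rfl hu
    · exact absurd rfl hu
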